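/- Let 𝒮 ⊆ 𝒯 be a π-system (stable under pairwise intersections) with σ(𝒮) = 𝒯, and suppose that for every A ∈ 𝒮, E(Cov_n(1_A,1_A|I)) → 0 as n → ∞. Then for every f ∈ L²(μ), the sequence f∘T^n converges weakly in L²(μ) to E(f|I). -/

import Mathlib

open MeasureTheory Filter Topology

noncomputable section

/-- The σ-algebra of invariant measurable sets of `T`. -/
def invSigma {Ω : Type*} [MeasurableSpace Ω] (T : Ω → Ω) : MeasurableSpace Ω where
  MeasurableSet' A := MeasurableSet A ∧ T ⁻¹' A = A
  measurableSet_empty := ⟨MeasurableSet.empty, by simp⟩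
  measurableSet_compl := fun A hA => ⟨hA.1.compl, by rw [Set.preimage_compl, hA.2]⟩
  measurableSet_iUnion := fun f hf =>
    ⟨MeasurableSet.iUnion fun i => (hf i).1, by
      rw [Set.preimage_iUnion]
      exact Set.iUnion_congr fun i => (hf i).2⟩

/-- `E(Cov_n(f,g|I)) = ∫ conj(f)·(g∘T^n) dμ − ∫ conj(E(f|I))·E(g|I) dμ`. -/
def expCovInv {Ω : Type*} [MeasurableSpace Ω] (μ : Measure Ω) (T : Ω → Ω)
    (f g : Ω → ℂ) (n : ℕ) : ℂ :=
  (∫ x, (starRingEnd ℂ) (f x) * g (T^[n] x) ∂μ) -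
    ∫ x, (starRingEnd ℂ) ((μ[f | invSigma T]) x) * (μ[g | invSigma T]) x ∂μ

open scoped InnerProductSpace ComplexConjugate ENNReal

set_option linter.unusedSectionVars false

section HilbertLemma

variable {E : Type*} [NormedAddCommGroup E] [InnerProductSpace ℂ E]

lemma isClosed_weakZero (v : ℕ → E) (C : ℝ) (hC : ∀ n, ‖v n‖ ≤ C) :
    IsClosed {y : E | Tendsto (fun n => ⟪y, v n⟫_ℂ) atTop (𝓝 0)} := by
  rw [← isSeqClosed_iff_isClosed]
  intro u y hu hlim
  show Tendsto (fun n => ⟪y, v n⟫_ℂ) atTop (𝓝 0)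
  rw [NormedAddCommGroup.tendsto_nhds_zero]
  intro ε hε
  have hC0 : (0:ℝ) < C + 1 := by
    have := (norm_nonneg (v 0)).trans (hC 0); linarith
  obtain ⟨j, hj⟩ : ∃ j, ‖y - u j‖ < ε / 2 / (C + 1) := by
    have := (Metric.tendsto_atTop.1 hlim) (ε / 2 / (C + 1)) (by positivity)
    obtain ⟨j, hj⟩ := this
    exact ⟨j, by simpa [dist_eq_norm, norm_sub_rev] using hj j le_rfl⟩
  have h2 := (NormedAddCommGroup.tendsto_nhds_zero.1 (hu j)) (ε / 2) (by positivity)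
  filter_upwards [h2] with n hn
  have : ⟪y, v n⟫_ℂ = ⟪y - u j, v n⟫_ℂ + ⟪u j, v n⟫_ℂ := by
    rw [← inner_add_left, sub_add_cancel]
  rw [this]
  calc ‖⟪y - u j, v n⟫_ℂ + ⟪u j, v n⟫_ℂ‖ ≤ ‖⟪y - u j, v n⟫_ℂ‖ + ‖⟪u j, v n⟫_ℂ‖ :=
        norm_add_le _ _
    _ ≤ ‖y - u j‖ * ‖v n‖ + ‖⟪u j, v n⟫_ℂ‖ := by
        gcongr; exact norm_inner_le_norm _ _
    _ < ε / 2 / (C + 1) * (C + 1) + ε / 2 := by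
        have h1 : ‖y - u j‖ * ‖v n‖ ≤ ‖y - u j‖ * (C+1) :=
          mul_le_mul_of_nonneg_left ((hC n).trans (by linarith)) (norm_nonneg _)
        have h3 : ‖y - u j‖ * (C+1) < ε / 2 / (C + 1) * (C + 1) := by gcongr
        linarith
    _ = ε := by field_simp; ring

lemma weak_zero_of_diag [CompleteSpace E] (v : ℕ → E)
    (hC : ∀ n, ‖v n‖ ≤ ‖v 0‖)
    (hshift : ∀ k n, ⟪v k, v (n + k)⟫_ℂ = ⟪v 0, v n⟫_ℂ)
    (hdiag : Tendsto (fun n => ⟪v 0, v n⟫_ℂ) atTop (𝓝 0)) :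
    ∀ y : E, Tendsto (fun n => ⟪y, v n⟫_ℂ) atTop (𝓝 0) := by
  set Vset : Set E := {y : E | Tendsto (fun n => ⟪y, v n⟫_ℂ) atTop (𝓝 0)} with hVset
  have hclosed : IsClosed Vset := isClosed_weakZero v ‖v 0‖ hC
  have hmemv : ∀ k, v k ∈ Vset := by
    intro k
    have h1 : Tendsto (fun n => ⟪v 0, v (n - k)⟫_ℂ) atTop (𝓝 0) :=
      hdiag.comp (tendsto_sub_atTop_nat k)
    refine h1.congr' ?_
    filter_upwards [eventually_ge_atTop k] with n hn
    have h2 : n - k + k = n := Nat.sub_add_cancel hn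
    calc ⟪v 0, v (n - k)⟫_ℂ = ⟪v k, v (n - k + k)⟫_ℂ := (hshift k (n - k)).symm
      _ = ⟪v k, v n⟫_ℂ := by rw [h2]
  let V : Submodule ℂ E :=
    { carrier := Vset
      zero_mem' := by simp [hVset, tendsto_const_nhds]
      add_mem' := by
        intro a b ha hb
        have := (ha.add hb)
        simpa [hVset, inner_add_left] using this
      smul_mem' := by
        intro c a ha
        have := ha.const_mul (conj c : ℂ)
        simpa [hVset, inner_smul_left, mul_comm] using this }
  let K : Submodule ℂ E := (Submodule.span ℂ (Set.range v)).topologicalClosure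
  have hKV : K ≤ V :=
    Submodule.topologicalClosure_minimal _
      (Submodule.span_le.2 (by rintro _ ⟨k, rfl⟩; exact hmemv k)) hclosed
  haveI : CompleteSpace K :=
    (Submodule.span ℂ (Set.range v)).isClosed_topologicalClosure.completeSpace_coe
  intro y
  set z : E := (K.orthogonalProjection y : E) with hz
  have hvK : ∀ n, v n ∈ K :=
    fun n => Submodule.le_topologicalClosure _ (Submodule.subset_span ⟨n, rfl⟩)
  have horth : ∀ n, ⟪y - z, v n⟫_ℂ = 0 := by
    intro n
    have hmem : y - z ∈ Kᗮ := K.sub_starProjection_mem_orthogonal y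
    have := (Submodule.mem_orthogonal K (y - z)).1 hmem (v n) (hvK n)
    rw [← inner_conj_symm, this, map_zero]
  have hzV : z ∈ Vset := hKV (K.orthogonalProjection y).2
  have : ∀ n, ⟪y, v n⟫_ℂ = ⟪z, v n⟫_ℂ := by
    intro n
    have : y = (y - z) + z := by abel
    rw [this, inner_add_left, horth n, zero_add]
  simpa [this, hVset] using hzV

end HilbertLemma

section MeasureLayer

variable {Ω : Type*} [m : MeasurableSpace Ω]

lemma invSigma_le (T : Ω → Ω) : invSigma T ≤ m := fun _ hA => hA.1

lemma comp_eq_of_invMeasurable {T : Ω → Ω} {g : Ω → ℂ}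
    (hg : Measurable[invSigma T] g) : g ∘ T = g := by
  funext x
  have h : T ⁻¹' (g ⁻¹' {g x}) = g ⁻¹' {g x} :=
    (hg (measurableSet_singleton (g x))).2
  have hx : x ∈ T ⁻¹' (g ⁻¹' {g x}) := by rw [h]; exact rfl
  exact hx

lemma comp_iterate_eq_of_invMeasurable {T : Ω → Ω} {g : Ω → ℂ}
    (hg : Measurable[invSigma T] g) (n : ℕ) : g ∘ T^[n] = g := by
  induction n with
  | zero => simp
  | succ k ih =>
      rw [Function.iterate_succ']
      calc g ∘ (T ∘ T^[k]) = (g ∘ T) ∘ T^[k] := rfl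
        _ = g ∘ T^[k] := by rw [comp_eq_of_invMeasurable hg]
        _ = g := ih

lemma condexp_comp_iterate (μ : Measure Ω) (T : Ω → Ω) (f : Ω → ℂ) (n : ℕ) :
    (μ[f | invSigma T]) ∘ T^[n] = μ[f | invSigma T] :=
  comp_iterate_eq_of_invMeasurable
    (stronglyMeasurable_condExp (m := invSigma T)).measurable n

instance : Fact ((1:ℝ≥0∞) ≤ 2) := ⟨one_le_two⟩

variable (μ : Measure Ω) [IsProbabilityMeasure μ] (T : Ω → Ω) (hT : MeasurePreserving T μ μ)

lemma condexpL2_ae_eq_condexp' (f : Lp ℂ 2 μ) :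
    (condExpL2 ℂ ℂ (invSigma_le T) f : Ω → ℂ) =ᵐ[μ] μ[f | invSigma T] := by
  haveI : SigmaFinite (μ.trim (invSigma_le T)) := by
    haveI : IsFiniteMeasure (μ.trim (invSigma_le T)) := isFiniteMeasure_trim _
    infer_instance
  refine ae_eq_condExp_of_forall_setIntegral_eq (invSigma_le T)
    ((Lp.memLp f).integrable one_le_two)
    (fun s hs hμs => integrableOn_condExpL2_of_measure_ne_top (invSigma_le T) hμs.ne f)
    (fun s hs hμs => integral_condExpL2_eq_of_fin_meas_real f hs hμs.ne)
    (aestronglyMeasurable_condExpL2 (invSigma_le T) f)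

/-- Koopman operator of `T^[n]` on `L²`. -/
def Koop (n : ℕ) : Lp ℂ 2 μ →ₗᵢ[ℂ] Lp ℂ 2 μ :=
  Lp.compMeasurePreservingₗᵢ ℂ (T^[n]) (hT.iterate n)

/-- Projection `P` = condexpL2 viewed in `Lp`. -/
def Pj (h : Lp ℂ 2 μ) : Lp ℂ 2 μ := (condExpL2 ℂ ℂ (invSigma_le T) h : Lp ℂ 2 μ)

variable {μ T}

lemma Pj_coeFn (h : Lp ℂ 2 μ) : ⇑(Pj μ T h) =ᵐ[μ] μ[h | invSigma T] :=
  condexpL2_ae_eq_condexp' μ T h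

lemma Pj_add (a b : Lp ℂ 2 μ) : Pj μ T (a + b) = Pj μ T a + Pj μ T b := by
  unfold Pj; rw [map_add]; rfl

lemma Pj_smul (c : ℂ) (a : Lp ℂ 2 μ) : Pj μ T (c • a) = c • Pj μ T a := by
  unfold Pj; rw [_root_.map_smul]; rfl

lemma Pj_continuous : Continuous (Pj μ T : Lp ℂ 2 μ → Lp ℂ 2 μ) :=
  continuous_subtype_val.comp (condExpL2 ℂ ℂ (invSigma_le T)).continuous

lemma Koop_coeFn (n : ℕ) (h : Lp ℂ 2 μ) :
    ⇑(Koop μ T hT n h) =ᵐ[μ] ⇑h ∘ T^[n] :=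
  Lp.coeFn_compMeasurePreserving h (hT.iterate n)

lemma Koop_zero (h : Lp ℂ 2 μ) : Koop μ T hT 0 h = h := by
  refine Lp.ext ((Koop_coeFn hT 0 h).trans ?_)
  simp

lemma Koop_comp (k n : ℕ) (h : Lp ℂ 2 μ) :
    Koop μ T hT k (Koop μ T hT n h) = Koop μ T hT (n + k) h := by
  refine Lp.ext ?_
  have h1 : ⇑(Koop μ T hT k (Koop μ T hT n h)) =ᵐ[μ] ⇑(Koop μ T hT n h) ∘ T^[k] :=
    Koop_coeFn hT k _
  have h2 : ⇑(Koop μ T hT n h) ∘ T^[k] =ᵐ[μ] (⇑h ∘ T^[n]) ∘ T^[k] :=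
    (hT.iterate k).quasiMeasurePreserving.ae_eq_comp (Koop_coeFn hT n h)
  have h3 : (⇑h ∘ T^[n]) ∘ T^[k] = ⇑h ∘ T^[n + k] := by
    rw [Function.iterate_add]; rfl
  exact (h1.trans (h2.trans (Filter.EventuallyEq.of_eq h3))).trans
    (Koop_coeFn hT (n + k) h).symm

lemma Koop_Pj (n : ℕ) (h : Lp ℂ 2 μ) :
    Koop μ T hT n (Pj μ T h) = Pj μ T h := by
  refine Lp.ext ?_
  have h0 : ⇑(Pj μ T h) =ᵐ[μ] μ[h | invSigma T] := Pj_coeFn h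
  have h1 : ⇑(Koop μ T hT n (Pj μ T h)) =ᵐ[μ] ⇑(Pj μ T h) ∘ T^[n] := Koop_coeFn hT n _
  have h2 : ⇑(Pj μ T h) ∘ T^[n] =ᵐ[μ] (μ[h | invSigma T]) ∘ T^[n] :=
    (hT.iterate n).quasiMeasurePreserving.ae_eq_comp h0
  rw [condexp_comp_iterate] at h2
  exact (h1.trans h2).trans h0.symm

lemma Koop_inner (k : ℕ) (a b : Lp ℂ 2 μ) :
    ⟪Koop μ T hT k a, Koop μ T hT k b⟫_ℂ = ⟪a, b⟫_ℂ :=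
  LinearIsometry.inner_map_map _ a b

lemma Pj_inner_self (h : Lp ℂ 2 μ) :
    ⟪Pj μ T h, Pj μ T h⟫_ℂ = ⟪h, Pj μ T h⟫_ℂ :=
  inner_condExpL2_eq_inner_fun (invSigma_le T) h (Pj μ T h)
    (aestronglyMeasurable_condExpL2 (invSigma_le T) h)

lemma key_identity (n : ℕ) (h : Lp ℂ 2 μ) :
    ⟪h - Pj μ T h, Koop μ T hT n (h - Pj μ T h)⟫_ℂ
      = ⟪h, Koop μ T hT n h⟫_ℂ - ⟪Pj μ T h, Pj μ T h⟫_ℂ := by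
  have hPU : ⟪Pj μ T h, Koop μ T hT n h⟫_ℂ = ⟪Pj μ T h, Pj μ T h⟫_ℂ := by
    calc ⟪Pj μ T h, Koop μ T hT n h⟫_ℂ
        = ⟪Koop μ T hT n (Pj μ T h), Koop μ T hT n h⟫_ℂ := by rw [Koop_Pj]
      _ = ⟪Pj μ T h, h⟫_ℂ := Koop_inner hT n _ _
      _ = conj ⟪h, Pj μ T h⟫_ℂ := (inner_conj_symm _ _).symm
      _ = conj ⟪Pj μ T h, Pj μ T h⟫_ℂ := by rw [Pj_inner_self]
      _ = ⟪Pj μ T h, Pj μ T h⟫_ℂ := inner_conj_symm _ _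
  have hK : Koop μ T hT n (h - Pj μ T h) = Koop μ T hT n h - Pj μ T h := by
    rw [map_sub, Koop_Pj]
  rw [hK, inner_sub_left, inner_sub_right, inner_sub_right, hPU, ← Pj_inner_self]
  ring

/-- Integral-inner bridge for the Koopman term. -/
lemma integral_eq_inner_Koop (n : ℕ) (f g : Ω → ℂ) (fL gL : Lp ℂ 2 μ)
    (hfL : ⇑fL =ᵐ[μ] f) (hgL : ⇑gL =ᵐ[μ] g) :
    ∫ x, (starRingEnd ℂ) (g x) * f (T^[n] x) ∂μ = ⟪gL, Koop μ T hT n fL⟫_ℂ := by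
  rw [L2.inner_def]
  refine integral_congr_ae ?_ |>.symm
  have h1 : ⇑(Koop μ T hT n fL) =ᵐ[μ] f ∘ T^[n] :=
    (Koop_coeFn hT n fL).trans ((hT.iterate n).quasiMeasurePreserving.ae_eq_comp hfL)
  filter_upwards [h1, hgL] with x hx1 hx2
  rw [RCLike.inner_apply, hx1, hx2]
  exact mul_comm _ _

/-- Integral-inner bridge for conditional expectation against `g`. -/
lemma integral_eq_inner_Pj (f g : Ω → ℂ) (fL gL : Lp ℂ 2 μ)
    (hfL : ⇑fL =ᵐ[μ] f) (hgL : ⇑gL =ᵐ[μ] g) :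
    ∫ x, (starRingEnd ℂ) (g x) * (μ[f | invSigma T]) x ∂μ = ⟪gL, Pj μ T fL⟫_ℂ := by
  rw [L2.inner_def]
  refine integral_congr_ae ?_ |>.symm
  have h1 : ⇑(Pj μ T fL) =ᵐ[μ] μ[f | invSigma T] :=
    (Pj_coeFn fL).trans (condExp_congr_ae hfL)
  filter_upwards [h1, hgL] with x hx1 hx2
  rw [RCLike.inner_apply, hx1, hx2]
  exact mul_comm _ _

/-- Integral-inner bridge for the product of two conditional expectations. -/
lemma integral_eq_inner_Pj_Pj (f g : Ω → ℂ) (fL gL : Lp ℂ 2 μ)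
    (hfL : ⇑fL =ᵐ[μ] f) (hgL : ⇑gL =ᵐ[μ] g) :
    ∫ x, (starRingEnd ℂ) ((μ[f | invSigma T]) x) * (μ[g | invSigma T]) x ∂μ
      = ⟪Pj μ T fL, Pj μ T gL⟫_ℂ := by
  rw [L2.inner_def]
  refine integral_congr_ae ?_ |>.symm
  have h1 : ⇑(Pj μ T fL) =ᵐ[μ] μ[f | invSigma T] :=
    (Pj_coeFn fL).trans (condExp_congr_ae hfL)
  have h2 : ⇑(Pj μ T gL) =ᵐ[μ] μ[g | invSigma T] :=
    (Pj_coeFn gL).trans (condExp_congr_ae hgL)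
  filter_upwards [h1, h2] with x hx1 hx2
  rw [RCLike.inner_apply, hx1, hx2]
  exact mul_comm _ _

end MeasureLayer

section GoodLayer

variable {Ω : Type*} [m : MeasurableSpace Ω]
variable (μ : Measure Ω) [IsProbabilityMeasure μ] (T : Ω → Ω) (hT : MeasurePreserving T μ μ)

/-- Elements whose Koopman orbit converges weakly to `0`. -/
def goodSet : Set (Lp ℂ 2 μ) :=
  {x | ∀ y : Lp ℂ 2 μ, Tendsto (fun n => ⟪y, Koop μ T hT n x⟫_ℂ) atTop (𝓝 0)}

variable {μ T}

lemma good_zero : (0 : Lp ℂ 2 μ) ∈ goodSet μ T hT := by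
  intro y; simp [map_zero]

lemma good_add {a b : Lp ℂ 2 μ} (ha : a ∈ goodSet μ T hT) (hb : b ∈ goodSet μ T hT) :
    a + b ∈ goodSet μ T hT := by
  intro y
  have := (ha y).add (hb y)
  simpa [map_add, inner_add_right] using this

lemma good_smul (c : ℂ) {a : Lp ℂ 2 μ} (ha : a ∈ goodSet μ T hT) :
    c • a ∈ goodSet μ T hT := by
  intro y
  have := (ha y).const_mul c
  simpa [_root_.map_smul, inner_smul_right] using this

lemma good_neg {a : Lp ℂ 2 μ} (ha : a ∈ goodSet μ T hT) : -a ∈ goodSet μ T hT := by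
  have := good_smul hT (-1 : ℂ) ha
  simpa using this

lemma good_sub {a b : Lp ℂ 2 μ} (ha : a ∈ goodSet μ T hT) (hb : b ∈ goodSet μ T hT) :
    a - b ∈ goodSet μ T hT := by
  rw [sub_eq_add_neg]; exact good_add hT ha (good_neg hT hb)

lemma isClosed_goodSet : IsClosed (goodSet μ T hT) := by
  rw [← isSeqClosed_iff_isClosed]
  intro u x hu hlim
  intro y
  rw [NormedAddCommGroup.tendsto_nhds_zero]
  intro ε hε
  obtain ⟨j, hj⟩ : ∃ j, ‖x - u j‖ < ε / 2 / (‖y‖ + 1) := by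
    have := (Metric.tendsto_atTop.1 hlim) (ε / 2 / (‖y‖ + 1))
      (by positivity)
    obtain ⟨j, hj⟩ := this
    exact ⟨j, by simpa [dist_eq_norm, norm_sub_rev] using hj j le_rfl⟩
  have h2 := (NormedAddCommGroup.tendsto_nhds_zero.1 (hu j y)) (ε / 2) (by positivity)
  filter_upwards [h2] with n hn
  have hxsplit : ⟪y, Koop μ T hT n x⟫_ℂ
      = ⟪y, Koop μ T hT n (x - u j)⟫_ℂ + ⟪y, Koop μ T hT n (u j)⟫_ℂ := by
    rw [← inner_add_right, ← map_add, sub_add_cancel]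
  rw [hxsplit]
  have hb : ‖⟪y, Koop μ T hT n (x - u j)⟫_ℂ‖ ≤ ‖y‖ * ‖x - u j‖ := by
    refine (norm_inner_le_norm _ _).trans ?_
    rw [LinearIsometry.norm_map]
  have hy1 : (0:ℝ) < ‖y‖ + 1 := by positivity
  calc ‖⟪y, Koop μ T hT n (x - u j)⟫_ℂ + ⟪y, Koop μ T hT n (u j)⟫_ℂ‖
      ≤ ‖⟪y, Koop μ T hT n (x - u j)⟫_ℂ‖ + ‖⟪y, Koop μ T hT n (u j)⟫_ℂ‖ := norm_add_le _ _
    _ < ‖y‖ * ‖x - u j‖ + ε / 2 := by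
        have := hb; linarith
    _ ≤ (‖y‖ + 1) * ‖x - u j‖ + ε / 2 := by
        gcongr; linarith
    _ < (‖y‖ + 1) * (ε / 2 / (‖y‖ + 1)) + ε / 2 := by gcongr
    _ = ε := by field_simp; ring

lemma good_of_diag {x : Lp ℂ 2 μ}
    (hdiag : Tendsto (fun n => ⟪x, Koop μ T hT n x⟫_ℂ) atTop (𝓝 0)) :
    x ∈ goodSet μ T hT := by
  intro y
  refine weak_zero_of_diag (fun n => Koop μ T hT n x) ?_ ?_ ?_ y
  · intro n
    rw [LinearIsometry.norm_map, LinearIsometry.norm_map]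
  · intro k n
    show ⟪Koop μ T hT k x, Koop μ T hT (n + k) x⟫_ℂ = ⟪Koop μ T hT 0 x, Koop μ T hT n x⟫_ℂ
    rw [← Koop_comp hT k n x, Koop_inner, Koop_zero]
  · have : ∀ n, ⟪Koop μ T hT 0 x, Koop μ T hT n x⟫_ℂ = ⟪x, Koop μ T hT n x⟫_ℂ := by
      intro n; rw [Koop_zero]
    show Tendsto (fun n => ⟪Koop μ T hT 0 x, Koop μ T hT n x⟫_ℂ) atTop (𝓝 0)
    simpa [this] using hdiag

end GoodLayer

section MainLayer

variable {Ω : Type*} [m : MeasurableSpace Ω]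
variable {μ : Measure Ω} [IsProbabilityMeasure μ] {T : Ω → Ω} (hT : MeasurePreserving T μ μ)

lemma Pj_zero : Pj μ T (0 : Lp ℂ 2 μ) = 0 := by
  unfold Pj; rw [map_zero]; rfl

lemma Pj_sub (a b : Lp ℂ 2 μ) : Pj μ T (a - b) = Pj μ T a - Pj μ T b := by
  unfold Pj; rw [map_sub]; rfl

/-- Membership in `GSet`: `h - Pj h` pairs weakly to zero under Koopman iterates. -/
def GSet : Set (Lp ℂ 2 μ) := {h | h - Pj μ T h ∈ goodSet μ T hT}

lemma GSet_zero : (0 : Lp ℂ 2 μ) ∈ GSet hT := by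
  show (0 : Lp ℂ 2 μ) - Pj μ T 0 ∈ goodSet μ T hT
  rw [Pj_zero, sub_zero]
  exact good_zero hT

lemma GSet_add {a b : Lp ℂ 2 μ} (ha : a ∈ GSet hT) (hb : b ∈ GSet hT) :
    a + b ∈ GSet hT := by
  show (a + b) - Pj μ T (a + b) ∈ goodSet μ T hT
  rw [Pj_add]
  have : a + b - (Pj μ T a + Pj μ T b) = (a - Pj μ T a) + (b - Pj μ T b) := by abel
  rw [this]
  exact good_add hT ha hb

lemma GSet_smul (c : ℂ) {a : Lp ℂ 2 μ} (ha : a ∈ GSet hT) : c • a ∈ GSet hT := by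
  show c • a - Pj μ T (c • a) ∈ goodSet μ T hT
  rw [Pj_smul, ← smul_sub]
  exact good_smul hT c ha

lemma GSet_sub {a b : Lp ℂ 2 μ} (ha : a ∈ GSet hT) (hb : b ∈ GSet hT) :
    a - b ∈ GSet hT := by
  show (a - b) - Pj μ T (a - b) ∈ goodSet μ T hT
  rw [Pj_sub]
  have : a - b - (Pj μ T a - Pj μ T b) = (a - Pj μ T a) - (b - Pj μ T b) := by abel
  rw [this]
  exact good_sub hT ha hb

lemma GSet_closed : IsClosed (GSet hT : Set (Lp ℂ 2 μ)) := by
  have : (GSet hT : Set (Lp ℂ 2 μ)) = (fun h => h - Pj μ T h) ⁻¹' goodSet μ T hT := rfl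
  rw [this]
  exact (isClosed_goodSet hT).preimage (continuous_id.sub Pj_continuous)

/-- The constant-one function belongs to `GSet`. -/
lemma univ_mem_GSet :
    indicatorConstLp 2 MeasurableSet.univ (measure_ne_top μ Set.univ) (1:ℂ) ∈ GSet hT := by
  set u := indicatorConstLp 2 MeasurableSet.univ (measure_ne_top μ Set.univ) (1:ℂ) with hu
  have h1 : ⇑u =ᵐ[μ] fun _ => (1:ℂ) :=
    indicatorConstLp_coeFn.trans (by rw [Set.indicator_univ])
  have h2 : ⇑(Pj μ T u) =ᵐ[μ] fun _ => (1:ℂ) := by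
    refine (Pj_coeFn u).trans ?_
    refine (condExp_congr_ae h1).trans ?_
    rw [condExp_const (invSigma_le T)]
  have h3 : u - Pj μ T u = 0 := by
    refine Lp.ext ?_
    refine (Lp.coeFn_sub u (Pj μ T u)).trans ?_
    filter_upwards [h1, h2, Lp.coeFn_zero ℂ 2 μ] with x hx1 hx2 hx0
    simp [hx1, hx2, hx0]
  show u - Pj μ T u ∈ goodSet μ T hT
  rw [h3]
  exact good_zero hT

end MainLayer

/-- If `S` is a π-system generating the full σ-algebra and every `A ∈ S` satisfies
`E(Cov_n(1_A,1_A|I)) → 0`, then for every `f ∈ L²(μ)` the sequence `f∘T^n` converges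
weakly in `L²(μ)` to `E(f|I)`: for every `g ∈ L²(μ)`,
`∫ conj(g)·(f∘T^n) dμ → ∫ conj(g)·E(f|I) dμ`. -/
theorem weak_L2_convergence_of_piSystem
    {Ω : Type*} [m : MeasurableSpace Ω] (μ : Measure Ω) [IsProbabilityMeasure μ]
    (T : Ω → Ω) (hT : MeasurePreserving T μ μ)
    (S : Set (Set Ω)) (hSmeas : ∀ A ∈ S, MeasurableSet A)
    (hSpi : ∀ A ∈ S, ∀ B ∈ S, A ∩ B ∈ S)
    (hSgen : MeasurableSpace.generateFrom S = m)
    (hS : ∀ A ∈ S,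
      Tendsto
        (fun n : ℕ =>
          expCovInv μ T (A.indicator fun _ => (1 : ℂ)) (A.indicator fun _ => (1 : ℂ)) n)
        atTop (𝓝 0)) :
    ∀ f : Ω → ℂ, MemLp f 2 μ →
      ∀ g : Ω → ℂ, MemLp g 2 μ →
        Tendsto (fun n : ℕ => ∫ x, (starRingEnd ℂ) (g x) * f (T^[n] x) ∂μ) atTop
          (𝓝 (∫ x, (starRingEnd ℂ) (g x) * (μ[f | invSigma T]) x ∂μ)) := by
  -- Step 1: indicators of sets in `S` belong to `GSet`.
  have hbasic : ∀ A ∈ S, ∀ (hA : MeasurableSet A),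
      indicatorConstLp 2 hA (measure_ne_top μ A) (1:ℂ) ∈ GSet hT := by
    intro A hAS hA
    set aL := indicatorConstLp 2 hA (measure_ne_top μ A) (1:ℂ) with haL
    have hcoe : ⇑aL =ᵐ[μ] A.indicator (fun _ => (1:ℂ)) := indicatorConstLp_coeFn
    have hid : ∀ n, expCovInv μ T (A.indicator fun _ => (1:ℂ)) (A.indicator fun _ => (1:ℂ)) n
        = ⟪aL - Pj μ T aL, Koop μ T hT n (aL - Pj μ T aL)⟫_ℂ := by
      intro n
      unfold expCovInv
      rw [integral_eq_inner_Koop hT n _ _ aL aL hcoe hcoe,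
        integral_eq_inner_Pj_Pj _ _ aL aL hcoe hcoe, ← key_identity hT n aL]
    refine good_of_diag hT ?_
    have := hS A hAS
    rw [funext hid] at this
    exact this
  -- Step 2: indicators of all measurable sets belong to `GSet`, via Dynkin's lemma.
  have hmeasInd : ∀ t : Set Ω, MeasurableSet t → ∀ (ht : MeasurableSet t),
      indicatorConstLp 2 ht (measure_ne_top μ t) (1:ℂ) ∈ GSet hT := by
    refine MeasurableSpace.induction_on_inter (C := fun t _ => ∀ (ht : MeasurableSet t),
      indicatorConstLp 2 ht (measure_ne_top μ t) (1:ℂ) ∈ GSet hT)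
      hSgen.symm (fun A hA B hB _ => hSpi A hA B hB) ?_ ?_ ?_ ?_
    · -- empty set
      intro hempty
      have h0 : indicatorConstLp 2 hempty (measure_ne_top μ ∅) (1:ℂ) = 0 := by
        refine Lp.ext (indicatorConstLp_coeFn.trans ?_)
        refine (Filter.EventuallyEq.of_eq (by funext x; simp)).trans (Lp.coeFn_zero ℂ 2 μ).symm
      rw [h0]
      exact GSet_zero hT
    · exact fun A hAS => hbasic A hAS
    · -- complement
      intro t htm hC htc
      have heq : indicatorConstLp 2 htc (measure_ne_top μ tᶜ) (1:ℂ)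
          = indicatorConstLp 2 MeasurableSet.univ (measure_ne_top μ Set.univ) (1:ℂ)
            - indicatorConstLp 2 htm (measure_ne_top μ t) (1:ℂ) := by
        refine Lp.ext ?_
        refine indicatorConstLp_coeFn.trans ?_
        refine Filter.EventuallyEq.trans ?_ (Lp.coeFn_sub _ _).symm
        filter_upwards [(indicatorConstLp_coeFn :
            ⇑(indicatorConstLp 2 MeasurableSet.univ (measure_ne_top μ Set.univ) (1:ℂ))
              =ᵐ[μ] Set.univ.indicator fun _ => (1:ℂ)),
          (indicatorConstLp_coeFn :
            ⇑(indicatorConstLp 2 htm (measure_ne_top μ t) (1:ℂ))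
              =ᵐ[μ] t.indicator fun _ => (1:ℂ))] with x hx1 hx2
        rw [Pi.sub_apply, hx1, hx2]
        by_cases hx : x ∈ t <;> simp [hx]
      rw [heq]
      exact GSet_sub hT (univ_mem_GSet hT) (hC htm)
    · -- countable disjoint union
      intro f hdisj hfm hCf hUm
      set W : Set Ω := ⋃ i, f i with hW
      set b : ℕ → Set Ω := fun N => ⋃ i ∈ Finset.range N, f i with hb
      have hbm : ∀ N, MeasurableSet (b N) :=
        fun N => (Finset.range N).measurableSet_biUnion (fun i _ => hfm i)
      have hbW : ∀ N, b N ⊆ W := by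
        intro N x hx
        obtain ⟨i, _, hxi⟩ := Set.mem_iUnion₂.1 hx
        exact Set.mem_iUnion.2 ⟨i, hxi⟩
      have hbsucc : ∀ N, b (N + 1) = b N ∪ f N := by
        intro N
        rw [hb]
        simp only [Finset.range_add_one, Finset.set_biUnion_insert]
        rw [Set.union_comm]
      set Q : ℕ → Lp ℂ 2 μ :=
        fun N => indicatorConstLp 2 (hbm N) (measure_ne_top μ (b N)) (1:ℂ) with hQ
      have hQmem : ∀ N, Q N ∈ GSet hT := by
        intro N
        induction N with
        | zero =>
            have h0 : Q 0 = 0 := by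
              refine Lp.ext (indicatorConstLp_coeFn.trans ?_)
              have : b 0 = (∅ : Set Ω) := by simp [hb]
              refine (Filter.EventuallyEq.of_eq (by rw [this]; funext x; simp)).trans
                (Lp.coeFn_zero ℂ 2 μ).symm
            rw [h0]
            exact GSet_zero hT
        | succ N ih =>
            have hdis : Disjoint (b N) (f N) := by
              rw [Set.disjoint_left]
              intro x hx hxN
              obtain ⟨i, hi, hxi⟩ := Set.mem_iUnion₂.1 hx
              have hne : i ≠ N := Nat.ne_of_lt (Finset.mem_range.1 hi)
              exact Set.disjoint_left.1 (hdisj hne) hxi hxN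
            have heq : Q (N + 1) = Q N + indicatorConstLp 2 (hfm N) (measure_ne_top μ (f N)) 1 := by
              refine Lp.ext ?_
              refine indicatorConstLp_coeFn.trans ?_
              refine Filter.EventuallyEq.trans ?_ (Lp.coeFn_add _ _).symm
              filter_upwards [(indicatorConstLp_coeFn :
                  ⇑(Q N) =ᵐ[μ] (b N).indicator fun _ => (1:ℂ)),
                (indicatorConstLp_coeFn :
                  ⇑(indicatorConstLp 2 (hfm N) (measure_ne_top μ (f N)) (1:ℂ))
                    =ᵐ[μ] (f N).indicator fun _ => (1:ℂ))] with x hx1 hx2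
              rw [Pi.add_apply, hx1, hx2, hbsucc N, Set.indicator_union_of_disjoint hdis]
            rw [heq]
            exact GSet_add hT ih (hCf N (hfm N))
      -- convergence of `Q N` to the indicator of the union
      set WL := indicatorConstLp 2 hUm (measure_ne_top μ W) (1:ℂ) with hWL
      have hdmeas : ∀ N, MeasurableSet (W \ b N) := fun N => hUm.diff (hbm N)
      have hdiffeq : ∀ N, WL - Q N
          = indicatorConstLp 2 (hdmeas N) (measure_ne_top μ _) (1:ℂ) := by
        intro N
        refine Lp.ext ?_
        refine Filter.EventuallyEq.trans ((Lp.coeFn_sub _ _).trans ?_)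
          indicatorConstLp_coeFn.symm
        filter_upwards [(indicatorConstLp_coeFn : ⇑WL =ᵐ[μ] W.indicator fun _ => (1:ℂ)),
          (indicatorConstLp_coeFn : ⇑(Q N) =ᵐ[μ] (b N).indicator fun _ => (1:ℂ))] with x hx1 hx2
        rw [Pi.sub_apply, hx1, hx2]
        by_cases hxb : x ∈ b N
        · have hxW : x ∈ W := hbW N hxb
          simp [hxb, hxW, Set.indicator]
        · by_cases hxW : x ∈ W <;> simp [hxb, hxW, Set.indicator]
      have hμd : Tendsto (fun N => μ (W \ b N)) atTop (𝓝 0) := by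
        have hanti : Antitone (fun N => W \ b N) := by
          intro i j hij
          refine Set.diff_subset_diff_right ?_
          intro x hx
          obtain ⟨k, hk, hxk⟩ := Set.mem_iUnion₂.1 hx
          exact Set.mem_iUnion₂.2 ⟨k, Finset.mem_range.1 hk |>.trans_le hij |> Finset.mem_range.2, hxk⟩
        have hiInter : ⋂ N, (W \ b N) = (∅ : Set Ω) := by
          rw [Set.eq_empty_iff_forall_notMem]
          intro x hx
          have hx0 := Set.mem_iInter.1 hx 0
          obtain ⟨i, hxi⟩ := Set.mem_iUnion.1 hx0.1
          have hxi1 := Set.mem_iInter.1 hx (i + 1)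
          exact hxi1.2 (Set.mem_iUnion₂.2 ⟨i, Finset.mem_range.2 (Nat.lt_succ_self i), hxi⟩)
        have := tendsto_measure_iInter_atTop (μ := μ) (s := fun N => W \ b N)
          (fun N => (hdmeas N).nullMeasurableSet) hanti ⟨0, measure_ne_top μ _⟩
        rw [hiInter] at this
        simpa [Function.comp_def] using this
      have hnorm : Tendsto (fun N => ‖WL - Q N‖) atTop (𝓝 0) := by
        have hre : Tendsto (fun N => (μ (W \ b N)).toReal) atTop (𝓝 0) := by
          have := (ENNReal.tendsto_toReal (a := 0) (by simp)).comp hμd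
          simpa [Function.comp_def] using this
        have hrp : Tendsto (fun N => (μ (W \ b N)).toReal ^ ((1:ℝ)/2)) atTop (𝓝 0) := by
          have hc := (Real.continuousAt_rpow_const 0 ((1:ℝ)/2) (Or.inr (by norm_num))).tendsto.comp hre
          simpa [Real.zero_rpow (by norm_num : ((1:ℝ)/2) ≠ 0), Function.comp_def] using hc
        have heq : ∀ N, ‖WL - Q N‖ = (μ (W \ b N)).toReal ^ ((1:ℝ)/2) := by
          intro N
          rw [hdiffeq N, norm_indicatorConstLp (by norm_num) (by norm_num)]
          norm_num
          rfl
        simpa [heq] using hrp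
      have hQW : Tendsto Q atTop (𝓝 WL) := by
        rw [tendsto_iff_norm_sub_tendsto_zero]
        refine hnorm.congr ?_
        intro N
        rw [norm_sub_rev]
      exact (GSet_closed hT).mem_of_tendsto hQW (Filter.Eventually.of_forall hQmem)
  -- Step 3: every `L²` element belongs to `GSet`, via `Lp.induction`.
  have hall : ∀ h : Lp ℂ 2 μ, h ∈ GSet hT := by
    refine Lp.induction (E := ℂ) (μ := μ) (p := 2) ENNReal.ofNat_ne_top
      (fun h => h ∈ GSet hT) ?_ ?_ ?_
    · intro c s hs hμs
      rw [Lp.simpleFunc.coe_indicatorConst]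
      have heq : indicatorConstLp 2 hs hμs.ne c
          = c • indicatorConstLp 2 hs (measure_ne_top μ s) (1:ℂ) := by
        refine Lp.ext (indicatorConstLp_coeFn.trans ?_)
        refine Filter.EventuallyEq.trans ?_ (Lp.coeFn_smul c _).symm
        filter_upwards [(indicatorConstLp_coeFn :
          ⇑(indicatorConstLp 2 hs (measure_ne_top μ s) (1:ℂ))
            =ᵐ[μ] s.indicator fun _ => (1:ℂ))] with x hx
        rw [Pi.smul_apply, hx]
        by_cases hxs : x ∈ s <;> simp [hxs]
      rw [heq]
      exact GSet_smul hT c (hmeasInd s hs hs)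
    · intro f g hf hg hdisj hfG hgG
      exact GSet_add hT hfG hgG
    · exact GSet_closed hT
  -- Step 4: conclusion.
  intro f hf g hg
  set fL := hf.toLp f with hfL
  set gL := hg.toLp g with hgL
  have h1 : ∀ n, ∫ x, (starRingEnd ℂ) (g x) * f (T^[n] x) ∂μ = ⟪gL, Koop μ T hT n fL⟫_ℂ :=
    fun n => integral_eq_inner_Koop hT n f g fL gL (hf.coeFn_toLp) (hg.coeFn_toLp)
  have h2 : ∫ x, (starRingEnd ℂ) (g x) * (μ[f | invSigma T]) x ∂μ = ⟪gL, Pj μ T fL⟫_ℂ :=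
    integral_eq_inner_Pj f g fL gL (hf.coeFn_toLp) (hg.coeFn_toLp)
  rw [funext h1, h2]
  have hsplit : ∀ n, ⟪gL, Koop μ T hT n fL⟫_ℂ
      = ⟪gL, Koop μ T hT n (fL - Pj μ T fL)⟫_ℂ + ⟪gL, Pj μ T fL⟫_ℂ := by
    intro n
    rw [map_sub, Koop_Pj, inner_sub_right]
    ring
  rw [funext hsplit]
  have hgood := hall fL gL
  have := hgood.add (tendsto_const_nhds (x := ⟪gL, Pj μ T fL⟫_ℂ) (f := atTop))
  simpa using this

end
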